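/- If every coordinate a_k of a = (a_1, ..., a_m) lies in ∂A_r = {z : |z| = 1 or |z| = r}, then a is a peak point of the closed polyannulus (closure of A_r)^m: the product of suitable one-variable peaking functions f_{θ_k}(z) = e^{iθ_k}/(2e^{iθ_k} - z) or g_{φ_k}(z) = re^{iφ_k}/(2z - re^{iφ_k}) peaks at a. -/

import Mathlib

open Complex Set

private lemma diffOn_finset_prod {E : Type*} [NormedAddCommGroup E] [NormedSpace ℂ E]
    {ι : Type*} (u : Finset ι) (f : ι → E → ℂ) {s : Set E}
    (h : ∀ i ∈ u, DifferentiableOn ℂ (f i) s) :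
    DifferentiableOn ℂ (fun x => ∏ i ∈ u, f i x) s := by
  classical
  induction u using Finset.induction with
  | empty => simpa using differentiableOn_const 1
  | insert _ _ hni ih =>
    simp only [Finset.prod_insert hni]
    exact (h _ (Finset.mem_insert_self _ _)).mul
      (ih fun i hi => h i (Finset.mem_insert_of_mem hi))

/-- If every coordinate of a = (a_1, ..., a_m) lies in ∂A_r = {z : |z| = 1 or |z| = r},
then a is a peak point of the closed polyannulus (closure A_r)^m: there is a function
continuous on the closed polyannulus, holomorphic on the open polyannulus, equal to 1 at a
and of modulus < 1 at every other point of the closed polyannulus. -/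
theorem stmt_5 (r : ℝ) (hr0 : 0 < r) (hr1 : r < 1) (m : ℕ) (hm : 1 ≤ m)
    (a : Fin m → ℂ) (ha : ∀ k, ‖a k‖ = 1 ∨ ‖a k‖ = r) :
    ∃ f : (Fin m → ℂ) → ℂ,
      ContinuousOn f {z : Fin m → ℂ | ∀ k, r ≤ ‖z k‖ ∧ ‖z k‖ ≤ 1} ∧
      DifferentiableOn ℂ f {z : Fin m → ℂ | ∀ k, r < ‖z k‖ ∧ ‖z k‖ < 1} ∧
      f a = 1 ∧
      (∀ z : Fin m → ℂ, (∀ k, r ≤ ‖z k‖ ∧ ‖z k‖ ≤ 1) → z ≠ a → ‖f z‖ < 1) := by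
  classical
  set d : Fin m → ℂ → ℂ := fun k w => if ‖a k‖ = 1 then 2 * a k - w else 2 * w - a k with hd
  have hapos : ∀ k, 0 < ‖a k‖ := by
    intro k; rcases ha k with h | h <;> rw [h] <;> linarith
  have hane : ∀ k, a k ≠ 0 := fun k => by
    intro h0; have := hapos k; rw [h0] at this; simp at this
  have hdaa : ∀ k, d k (a k) = a k := by
    intro k; simp only [hd]; split <;> ring
  -- strict inequality for the denominator
  have hstrict : ∀ k (w : ℂ), r ≤ ‖w‖ → ‖w‖ ≤ 1 → w ≠ a k → ‖a k‖ < ‖d k w‖ := by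
    intro k w hwr hw1 hne
    have hnsne : 0 < Complex.normSq (w - a k) := Complex.normSq_pos.mpr (sub_ne_zero.mpr hne)
    rcases ha k with h | h
    · have hA : Complex.normSq (a k) = 1 := by
        rw [← Complex.sq_norm, h]; norm_num
      have hW : Complex.normSq w ≤ 1 := by
        rw [← Complex.sq_norm]; nlinarith [norm_nonneg w]
      have key : 1 < Complex.normSq (2 * a k - w) := by
        simp only [Complex.normSq_apply, Complex.sub_re, Complex.sub_im, Complex.mul_re,
          Complex.mul_im, Complex.re_ofNat, Complex.im_ofNat] at hA hW hnsne ⊢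
        nlinarith [hnsne, hW]
      rw [h]
      simp only [hd, if_pos h]
      have h2 : ‖2 * a k - w‖ ^ 2 = Complex.normSq (2 * a k - w) := by
        rw [Complex.sq_norm]
      nlinarith [norm_nonneg (2 * a k - w)]
    · have hA : Complex.normSq (a k) = r ^ 2 := by
        rw [← Complex.sq_norm, h]
      have hW : r ^ 2 ≤ Complex.normSq w := by
        rw [← Complex.sq_norm]; nlinarith
      have hno : ¬ ‖a k‖ = 1 := by rw [h]; linarith
      have key : r ^ 2 < Complex.normSq (2 * w - a k) := by
        simp only [Complex.normSq_apply, Complex.sub_re, Complex.sub_im, Complex.mul_re,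
          Complex.mul_im, Complex.re_ofNat, Complex.im_ofNat] at hA hW hnsne ⊢
        nlinarith [hnsne, hW]
      rw [h]
      simp only [hd, hno, if_false]
      have h2 : ‖2 * w - a k‖ ^ 2 = Complex.normSq (2 * w - a k) := by
        rw [Complex.sq_norm]
      nlinarith [norm_nonneg (2 * w - a k)]
  have hge : ∀ k (w : ℂ), r ≤ ‖w‖ → ‖w‖ ≤ 1 → ‖a k‖ ≤ ‖d k w‖ := by
    intro k w h1 h2
    by_cases hc : w = a k
    · rw [hc, hdaa k]
    · exact (hstrict k w h1 h2 hc).le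
  have hdne : ∀ k (w : ℂ), r ≤ ‖w‖ → ‖w‖ ≤ 1 → d k w ≠ 0 := by
    intro k w h1 h2 h0
    have := hge k w h1 h2
    rw [h0] at this; simp at this
    exact hane k this
  refine ⟨fun z => ∏ k, a k / d k (z k), ?_, ?_, ?_, ?_⟩
  · -- continuity
    apply continuousOn_finset_prod
    intro k _
    apply ContinuousOn.div continuousOn_const
    · apply Continuous.continuousOn
      simp only [hd]; split
      · exact continuous_const.sub (continuous_apply k)
      · exact (continuous_const.mul (continuous_apply k)).sub continuous_const
    · intro z hz
      exact hdne k (z k) (hz k).1 (hz k).2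
  · -- differentiability
    apply diffOn_finset_prod
    intro k _
    have hev : DifferentiableOn ℂ (fun z : Fin m → ℂ => z k)
        {z : Fin m → ℂ | ∀ k, r < ‖z k‖ ∧ ‖z k‖ < 1} :=
      (ContinuousLinearMap.proj (R := ℂ) (φ := fun _ : Fin m => ℂ) k).differentiable.differentiableOn
    have hden : DifferentiableOn ℂ (fun z : Fin m → ℂ => d k (z k))
        {z : Fin m → ℂ | ∀ k, r < ‖z k‖ ∧ ‖z k‖ < 1} := by
      simp only [hd]; split
      · exact (differentiableOn_const _).sub hev
      · exact ((differentiableOn_const (2:ℂ)).mul hev).sub (differentiableOn_const _)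
    have hnz : ∀ z ∈ {z : Fin m → ℂ | ∀ k, r < ‖z k‖ ∧ ‖z k‖ < 1}, d k (z k) ≠ 0 :=
      fun z hz => hdne k (z k) (hz k).1.le (hz k).2.le
    have : DifferentiableOn ℂ (fun z : Fin m → ℂ => a k * (d k (z k))⁻¹)
        {z : Fin m → ℂ | ∀ k, r < ‖z k‖ ∧ ‖z k‖ < 1} := (hden.inv hnz).const_mul _
    exact this.congr (fun z _ => by rw [div_eq_mul_inv])
  · -- value at a
    have : ∀ k : Fin m, a k / d k (a k) = 1 := by
      intro k; rw [hdaa k, div_self (hane k)]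
    simp [this]
  · -- strict bound elsewhere
    intro z hz hzne
    obtain ⟨k0, hk0⟩ : ∃ k, z k ≠ a k := by
      by_contra hc; push_neg at hc; exact hzne (funext hc)
    have hle1 : ∀ k : Fin m, ‖a k / d k (z k)‖ ≤ 1 := by
      intro k
      rw [norm_div]
      have hdpos : 0 < ‖d k (z k)‖ :=
        lt_of_lt_of_le (hapos k) (hge k (z k) (hz k).1 (hz k).2)
      rw [div_le_one hdpos]
      exact hge k (z k) (hz k).1 (hz k).2
    have hlt1 : ‖a k0 / d k0 (z k0)‖ < 1 := by
      rw [norm_div]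
      have hs := hstrict k0 (z k0) (hz k0).1 (hz k0).2 hk0
      have hdpos : 0 < ‖d k0 (z k0)‖ := lt_trans (hapos k0) hs
      rw [div_lt_one hdpos]
      exact hs
    rw [norm_prod]
    rw [← Finset.mul_prod_erase _ _ (Finset.mem_univ k0)]
    have h2 : ∏ k ∈ Finset.univ.erase k0, ‖a k / d k (z k)‖ ≤ 1 :=
      Finset.prod_le_one (fun k _ => norm_nonneg _) (fun k _ => hle1 k)
    calc ‖a k0 / d k0 (z k0)‖ * ∏ k ∈ Finset.univ.erase k0, ‖a k / d k (z k)‖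
        ≤ ‖a k0 / d k0 (z k0)‖ * 1 := by
          exact mul_le_mul_of_nonneg_left h2 (norm_nonneg _)
      _ < 1 := by rw [mul_one]; exact hlt1
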